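/- arXiv:math/0506542 — 3 statements merged into one kernel-verified Lean document; each statement's English description precedes it below -/
import Mathlib

section
/- For every commutative ring A, every family of weights R : ℤ → A, every integer a and every natural number k ≥ 1, the reflection relation Z_{a,a−1}(2k−1) = R_a · Z_{a−1,a}(2k−1) holds. -/
open Finset

variable {A : Type*} [CommRing A]

/-- End height of a walk starting at a given height, with steps given by a list of
Booleans (`true` = ascending step `+1`, `false` = descending step `-1`). -/
def walkEnd : ℤ → List Bool → ℤ
  | a, [] => a
  | a, true :: s => walkEnd (a + 1) s
  | a, false :: s => walkEnd (a - 1) s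

/-- Weight of a walk: the product of `R h` over all descending steps `h → h - 1`. -/
def walkWeight (R : ℤ → A) : ℤ → List Bool → A
  | _, [] => 1
  | a, true :: s => walkWeight R (a + 1) s
  | a, false :: s => R a * walkWeight R (a - 1) s

/-- Whether every height visited by the walk (including the first and last) is `≥ c`. -/
def walkAbove (c : ℤ) : ℤ → List Bool → Bool
  | a, [] => decide (c ≤ a)
  | a, true :: s => decide (c ≤ a) && walkAbove c (a + 1) s
  | a, false :: s => decide (c ≤ a) && walkAbove c (a - 1) s

/-- `Zw R a b k`: the generating function of walks of length `k` from height `a` to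
height `b`, each walk weighted by `R h` per descending step from height `h`. -/
def Zw (R : ℤ → A) (a b : ℤ) (k : ℕ) : A :=
  ∑ s : Fin k → Bool,
    if walkEnd a (List.ofFn s) = b then walkWeight R a (List.ofFn s) else 0

/-- `Zwp R a b k`: the same generating function, restricted to walks staying at
heights `≥ a` ("positive walks"). -/
def Zwp (R : ℤ → A) (a b : ℤ) (k : ℕ) : A :=
  ∑ s : Fin k → Bool,
    if walkEnd a (List.ofFn s) = b ∧ walkAbove a a (List.ofFn s) = true then
      walkWeight R a (List.ofFn s)
    else 0

/-- `Pdim R a b k`: hard-dimer partition function on the segment `[a,b]`: the sum over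
`k`-element subsets `S` of `{a+1, …, b}` with no two consecutive elements of
`∏ i in S, R i` (a dimer on `[i-1,i]` carries weight `R i`). -/
noncomputable def Pdim (R : ℤ → A) (a b : ℤ) (k : ℕ) : A :=
  ∑ S ∈ Finset.powersetCard k (Finset.Icc (a + 1) b),
    if ∀ i ∈ S, i + 1 ∉ S then ∏ i ∈ S, R i else 0

/-- `Vp R g m a b = Σ_{k=1}^{m} g_k • Zw R a b (2k-1)`: grand-canonical generating
function for walks of odd length from `a` to `b`. -/
def Vp (R : ℤ → A) (g : ℕ → A) (m : ℕ) (a b : ℤ) : A :=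
  ∑ k ∈ Finset.Icc 1 m, g k * Zw R a b (2 * k - 1)

/-- The conserved quantities `Γ_{2i}(n)`; `Gam R g m i n` stands for `Γ_{2i}(n)`. -/
def Gam (R : ℤ → A) (g : ℕ → A) (m : ℕ) (i : ℕ) (n : ℤ) : A :=
  if i = 0 then R (n - 1) - Vp R g m (n - 1) (n - 2) + (if n = 0 then 1 else 0)
  else
    Zwp R (n - 1) (n - 1) (2 * i) *
        (R (n - 1) - Vp R g m (n - 1) (n - 2) + (if n = 0 then 1 else 0)) -
      ∑ j ∈ Finset.Icc 1 i,
        Zwp R (n - 1) (n - 1 + 2 * (j : ℤ)) (2 * i) * Vp R g m (n + 2 * (j : ℤ) - 1) (n - 2)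

/-- The symmetric conserved quantities `Γ̃_{2i}(n)`; `Gamt R g m i n` stands
for `Γ̃_{2i}(n)`. -/
def Gamt (R : ℤ → A) (g : ℕ → A) (m : ℕ) (i : ℕ) (n : ℤ) : A :=
  if i = 0 then R n - Vp R g m n (n - 1)
  else
    (Zw R n (n - 1) (2 * i - 1) - R (n - 1) * R (n + 1) * Zw R (n - 2) (n + 1) (2 * i - 1)) *
        (R n - Vp R g m n (n - 1)) -
      ∑ j ∈ Finset.Icc 1 i,
        (Zw R (n - (j : ℤ)) (n + (j : ℤ) - 1) (2 * i - 1) -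
            R (n - (j : ℤ) - 1) * R (n + (j : ℤ) + 1) *
              Zw R (n - (j : ℤ) - 2) (n + (j : ℤ) + 1) (2 * i - 1)) *
          Vp R g m (n + (j : ℤ)) (n - (j : ℤ) - 1)

/-- The master equation: `R i = 0` for `i < 0` and `R n = 1 + V'_{n,n-1}` for `n ≥ 0`. -/
def MasterEq (R : ℤ → A) (g : ℕ → A) (m : ℕ) : Prop :=
  (∀ i : ℤ, i < 0 → R i = 0) ∧ ∀ n : ℤ, 0 ≤ n → R n = 1 + Vp R g m n (n - 1)

/-- `Zodd R a b i = Zw R a b (2i-1)`, with the convention that for `i = 0`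
(walks of length `-1`) it equals `1` if `b = a - 1` and `0` otherwise. -/
def Zodd (R : ℤ → A) (a b : ℤ) (i : ℕ) : A :=
  if i = 0 then (if b = a - 1 then 1 else 0) else Zw R a b (2 * i - 1)

/-- Binomial coefficient with an integer lower index, with the convention that it
vanishes for negative lower index. -/
def Cz (n : ℕ) (p : ℤ) : ℤ := if 0 ≤ p then n.choose p.toNat else 0

namespace Stmt1Aux

/-- Reverse-complement of a step list: the steps of the reversed walk. -/
def rc (l : List Bool) : List Bool := (l.map (! ·)).reverse

/-- Multiset of tops of descending steps. -/
def downs : ℤ → List Bool → Multiset ℤ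
  | _, [] => 0
  | a, true :: s => downs (a + 1) s
  | a, false :: s => a ::ₘ downs (a - 1) s

/-- Multiset of tops of ascending steps. -/
def ups : ℤ → List Bool → Multiset ℤ
  | _, [] => 0
  | a, true :: s => (a + 1) ::ₘ ups (a + 1) s
  | a, false :: s => ups (a - 1) s

theorem rc_cons (x : Bool) (s : List Bool) : rc (x :: s) = rc s ++ [!x] := by
  simp [rc]

theorem rc_rc (l : List Bool) : rc (rc l) = l := by
  simp [rc, Function.comp_def]

theorem walkEnd_append (a : ℤ) (s t : List Bool) :
    walkEnd a (s ++ t) = walkEnd (walkEnd a s) t := by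
  induction s generalizing a with
  | nil => rfl
  | cons x s ih => cases x <;> simp [walkEnd, ih]

theorem downs_append (a : ℤ) (s t : List Bool) :
    downs a (s ++ t) = downs a s + downs (walkEnd a s) t := by
  induction s generalizing a with
  | nil => simp [downs, walkEnd]
  | cons x s ih => cases x <;> simp [downs, walkEnd, ih]

theorem walkEnd_rc (a : ℤ) (s : List Bool) : walkEnd (walkEnd a s) (rc s) = a := by
  induction s generalizing a with
  | nil => rfl
  | cons x s ih =>
    cases x <;>
      simp only [walkEnd, rc_cons, walkEnd_append, ih] <;>
      simp [walkEnd]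

theorem downs_rc (a : ℤ) (s : List Bool) : downs (walkEnd a s) (rc s) = ups a s := by
  induction s generalizing a with
  | nil => rfl
  | cons x s ih =>
    cases x
    · simp only [walkEnd, rc_cons, downs_append, walkEnd_rc, ih, ups, downs]
      simp [downs]
    · simp only [walkEnd, rc_cons, downs_append, walkEnd_rc, ih, ups, downs]
      simp [downs]
      rw [add_comm, Multiset.singleton_add]

theorem walkWeight_eq {A : Type*} [CommRing A] (R : ℤ → A) (a : ℤ) (s : List Bool) :
    walkWeight R a s = ((downs a s).map R).prod := by
  induction s generalizing a with
  | nil => simp [walkWeight, downs]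
  | cons x s ih => cases x <;> simp [walkWeight, downs, ih]

theorem count_lemma (a : ℤ) (s : List Bool) (h : ℤ) :
    Multiset.count h (downs a s) + (if h ≤ walkEnd a s then 1 else 0) =
      Multiset.count h (ups a s) + (if h ≤ a then 1 else 0) := by
  induction s generalizing a with
  | nil =>
    simp [downs, ups, walkEnd]
    rfl
  | cons x s ih =>
    cases x
    · have := ih (a - 1)
      rw [walkEnd]
      simp only [downs, ups, walkEnd, Multiset.count_cons] at this ⊢
      split_ifs at this ⊢ <;> omega
    · have := ih (a + 1)
      rw [walkEnd]
      simp only [downs, ups, walkEnd, Multiset.count_cons] at this ⊢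
      split_ifs at this ⊢ <;> omega

theorem downs_eq {a : ℤ} {s : List Bool} (hs : walkEnd a s = a - 1) :
    downs a s = a ::ₘ ups a s := by
  ext h
  have := count_lemma a s h
  rw [hs] at this
  rw [Multiset.count_cons]
  split_ifs at * <;> omega

theorem ofFn_rev {α : Type*} {n : ℕ} (f : Fin n → α) :
    List.ofFn (fun i => f i.rev) = (List.ofFn f).reverse := by
  apply List.ext_getElem
  · simp
  · intro i h1 h2
    simp only [List.getElem_ofFn, List.getElem_reverse, Fin.rev]
    congr 1
    simp at h1 ⊢
    omega

end Stmt1Aux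

/-- the reflection relation `Z_{a,a-1}(2k-1) = R_a ⬝ Z_{a-1,a}(2k-1)`. -/
theorem stmt_1 {A : Type*} [CommRing A] (R : ℤ → A) (a : ℤ) (k : ℕ) (hk : 1 ≤ k) :
    Zw R a (a - 1) (2 * k - 1) = R a * Zw R (a - 1) a (2 * k - 1) := by
  classical
  unfold Zw
  rw [Finset.mul_sum]
  have hinv : Function.Involutive (fun (s : Fin (2 * k - 1) → Bool) => fun i => ! s i.rev) := by
    intro s; funext i; simp [Fin.rev_rev]
  apply Fintype.sum_bijective _ hinv.bijective
  intro s
  have hofn : List.ofFn (fun i => ! s i.rev) = Stmt1Aux.rc (List.ofFn s) := by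
    rw [Stmt1Aux.rc, List.map_ofFn, ← Stmt1Aux.ofFn_rev]
    rfl
  rw [hofn]
  set l := List.ofFn s with hl_def
  by_cases hl : walkEnd a l = a - 1
  · have h2 : walkEnd (a - 1) (Stmt1Aux.rc l) = a := by
      have := Stmt1Aux.walkEnd_rc a l; rw [hl] at this; exact this
    rw [if_pos hl, if_pos h2]
    rw [Stmt1Aux.walkWeight_eq, Stmt1Aux.walkWeight_eq, Stmt1Aux.downs_eq hl]
    have hd : Stmt1Aux.downs (a - 1) (Stmt1Aux.rc l) = Stmt1Aux.ups a l := by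
      have := Stmt1Aux.downs_rc a l; rw [hl] at this; exact this
    rw [hd]
    simp
  · rw [if_neg hl, if_neg, mul_zero]
    intro h2
    apply hl
    have := Stmt1Aux.walkEnd_rc (a - 1) (Stmt1Aux.rc l)
    rw [h2, Stmt1Aux.rc_rc] at this
    exact this
end

section
/- For every commutative ring A, every family of weights R : ℤ → A, every integer a and all natural numbers j, k, the following inversion relation between hard-dimer partition functions and positive-walk generating functions holds: Σ_{ℓ=0}^{k} (−1)^{k−ℓ} · Π_{a,a+2k−1}(k−ℓ) · Z⁺_{a,a+2j}(2ℓ) = δ_{k,j}, where δ_{k,j} is 1 if k = j and 0 otherwise. -/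
open Finset

variable {A : Type*} [CommRing A]

lemma walkEnd_append (a : ℤ) (s t : List Bool) :
    walkEnd a (s ++ t) = walkEnd (walkEnd a s) t := by
  induction s generalizing a with
  | nil => rfl
  | cons x s ih => cases x <;> simp [walkEnd, ih]

lemma walkWeight_append (R : ℤ → A) (a : ℤ) (s t : List Bool) :
    walkWeight R a (s ++ t) = walkWeight R a s * walkWeight R (walkEnd a s) t := by
  induction s generalizing a with
  | nil => simp [walkWeight, walkEnd]
  | cons x s ih => cases x <;> simp [walkWeight, walkEnd, ih, mul_assoc]

lemma walkAbove_append (c a : ℤ) (s t : List Bool) :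
    walkAbove c a (s ++ t) = (walkAbove c a s && walkAbove c (walkEnd a s) t) := by
  induction s generalizing a with
  | nil =>
    simp only [List.nil_append, walkEnd]
    cases t with
    | nil => simp [walkAbove]
    | cons y t => cases y <;> simp [walkAbove, Bool.and_assoc, Bool.and_comm, Bool.and_left_comm]
  | cons x s ih => cases x <;> simp [walkAbove, walkEnd, ih, Bool.and_assoc]

lemma walkAbove_end_le {c a : ℤ} {s : List Bool} (h : walkAbove c a s = true) :
    c ≤ walkEnd a s := by
  induction s generalizing a with
  | nil => simpa [walkAbove, walkEnd] using h
  | cons x s ih =>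
    cases x <;> simp [walkAbove, walkEnd] at h ⊢ <;> exact ih h.2

lemma List.ofFn_snoc' {n : ℕ} (s : Fin n → Bool) (x : Bool) :
    List.ofFn (Fin.snoc s x : Fin (n+1) → Bool) = List.ofFn s ++ [x] := by
  rw [List.ofFn_succ']
  simp [List.concat_eq_append]

lemma sum_pi_bool_snoc {n : ℕ} (f : (Fin (n+1) → Bool) → A) :
    ∑ s : Fin (n+1) → Bool, f s =
      ∑ s : Fin n → Bool, (f (Fin.snoc s false) + f (Fin.snoc s true)) := by
  rw [← Equiv.sum_comp (Fin.snocEquiv (fun _ => Bool)) f, Fintype.sum_prod_type_right]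
  refine Finset.sum_congr rfl fun x _ => ?_
  rw [Fintype.sum_bool]
  exact add_comm _ _

lemma Zwp_zero (R : ℤ → A) (a b : ℤ) : Zwp R a b 0 = if b = a then 1 else 0 := by
  rw [Zwp]
  rw [Fintype.sum_subsingleton _ (fun _ : Fin 0 => false)]
  simp [walkEnd, walkAbove, walkWeight, eq_comm]
lemma Zwp_of_lt (R : ℤ → A) {a b : ℤ} (k : ℕ) (h : b < a) : Zwp R a b k = 0 := by
  rw [Zwp]
  refine Finset.sum_eq_zero fun s _ => ?_
  rw [if_neg]
  rintro ⟨h1, h2⟩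
  exact absurd (walkAbove_end_le h2) (by omega)

lemma Zwp_succ (R : ℤ → A) (a b : ℤ) (n : ℕ) :
    Zwp R a b (n + 1) =
      (if a ≤ b then R (b + 1) * Zwp R a (b + 1) n + Zwp R a (b - 1) n else 0) := by
  rw [Zwp, sum_pi_bool_snoc]
  by_cases hab : a ≤ b
  · rw [if_pos hab, Zwp, Zwp, Finset.mul_sum, ← Finset.sum_add_distrib]
    refine Finset.sum_congr rfl fun s _ => ?_
    simp only [List.ofFn_snoc', walkEnd_append, walkWeight_append, walkAbove_append,
      walkEnd, walkWeight, walkAbove, Bool.and_eq_true, decide_eq_true_eq]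
    by_cases h1 : walkAbove a a (List.ofFn s) = true
    · have he : a ≤ walkEnd a (List.ofFn s) := walkAbove_end_le h1
      by_cases h2 : walkEnd a (List.ofFn s) = b + 1
      · have h3 : ¬ (walkEnd a (List.ofFn s) + 1 = b) := by omega
        rw [if_pos (by constructor <;> [omega; exact ⟨h1, he, by omega⟩]),
          if_neg (by rintro ⟨h', -⟩; omega), if_pos ⟨h2, h1⟩, if_neg (by rintro ⟨h', -⟩; omega)]
        rw [h2]; ring
      · by_cases h4 : walkEnd a (List.ofFn s) = b - 1
        · rw [if_neg (by rintro ⟨h', -⟩; omega), if_pos ⟨by omega, h1, he, by omega⟩,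
            if_neg (by rintro ⟨h', -⟩; omega), if_pos ⟨h4, h1⟩]
          ring
        · rw [if_neg (by rintro ⟨h', -⟩; omega), if_neg (by rintro ⟨h', -⟩; omega),
            if_neg (by rintro ⟨h', -⟩; omega), if_neg (by rintro ⟨h', -⟩; omega)]
          ring
    · rw [if_neg (by rintro ⟨-, h', -⟩; exact h1 h'), if_neg (by rintro ⟨-, h', -⟩; exact h1 h'),
        if_neg (by rintro ⟨-, h'⟩; exact h1 h'), if_neg (by rintro ⟨-, h'⟩; exact h1 h')]
      ring
  · rw [if_neg hab]
    refine Finset.sum_eq_zero fun s _ => ?_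
    simp only [List.ofFn_snoc', walkEnd_append, walkWeight_append, walkAbove_append,
      walkEnd, walkWeight, walkAbove, Bool.and_eq_true, decide_eq_true_eq]
    rw [if_neg (by rintro ⟨h', -, -, h''⟩; omega), if_neg (by rintro ⟨h', -, -, h''⟩; omega)]
    ring

lemma Zwp_two_step (R : ℤ → A) (a b : ℤ) (l : ℕ) (hb : a ≤ b) :
    Zwp R a b (2 * l + 2) =
      Zwp R a (b - 2) (2 * l) + R (b + 1) * Zwp R a b (2 * l)
        + (if a ≤ b - 1 then R b * Zwp R a b (2 * l) else 0)
        + R (b + 2) * R (b + 1) * Zwp R a (b + 2) (2 * l) := by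
  have e1 : (2 * l + 2) = (2 * l + 1) + 1 := rfl
  rw [e1, Zwp_succ, if_pos hb, Zwp_succ, Zwp_succ, if_pos (by omega : a ≤ b + 1)]
  have e2 : b + 1 + 1 = b + 2 := by ring
  have e3 : b + 1 - 1 = b := by ring
  rw [e2, e3]
  by_cases h : a ≤ b - 1
  · simp only [if_pos h]
    have e4 : b - 1 + 1 = b := by ring
    have e5 : b - 1 - 1 = b - 2 := by ring
    rw [e4, e5]
    ring
  · simp only [if_neg h]
    have hba : b = a := by omega
    rw [Zwp_of_lt R (2 * l) (by omega : b - 2 < a)]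
    ring

lemma Pdim_zero (R : ℤ → A) (a b : ℤ) : Pdim R a b 0 = 1 := by
  simp [Pdim]

lemma Pdim_nil (R : ℤ → A) {a b : ℤ} (h : b ≤ a) (m : ℕ) : Pdim R a b (m + 1) = 0 := by
  rw [Pdim, Finset.Icc_eq_empty (by omega),
    Finset.powersetCard_eq_empty.2 (by simp), Finset.sum_empty]

lemma Pdim_step (R : ℤ → A) {a b : ℤ} (h : a ≤ b) (m : ℕ) :
    Pdim R a (b + 1) (m + 1) = Pdim R a b (m + 1) + R (b + 1) * Pdim R a (b - 1) m := by
  have hins : Finset.Icc (a + 1) (b + 1) = insert (b + 1) (Finset.Icc (a + 1) b) := by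
    ext x; simp only [Finset.mem_Icc, Finset.mem_insert]; omega
  have hnm : (b + 1) ∉ Finset.Icc (a + 1) b := by simp
  rw [Pdim, hins, Finset.powersetCard_succ_insert hnm, Finset.sum_union ?hdisj]
  case hdisj =>
    rw [Finset.disjoint_left]
    intro S hS hS2
    rw [Finset.mem_powersetCard] at hS
    have hb1 : (b+1) ∉ S := fun hb => hnm (hS.1 hb)
    rw [Finset.mem_image] at hS2
    obtain ⟨T, -, rfl⟩ := hS2
    exact hb1 (Finset.mem_insert_self _ _)
  congr 1
  rw [Finset.sum_image ?hinj]
  case hinj =>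
    intro T hT T' hT' hEq
    rw [Finset.mem_coe, Finset.mem_powersetCard] at hT hT'
    have h1 : (b+1) ∉ T := fun hb => hnm (hT.1 hb)
    have h2 : (b+1) ∉ T' := fun hb => hnm (hT'.1 hb)
    have := congrArg (fun U : Finset ℤ => U.erase (b+1)) hEq
    simpa [Finset.erase_insert, h1, h2] using this
  rw [Pdim, Finset.mul_sum,
    ← Finset.sum_subset
      (Finset.powersetCard_mono (Finset.Icc_subset_Icc_right (by omega : b - 1 ≤ b))) ?vanish]
  case vanish =>
    intro T hT hT'
    rw [Finset.mem_powersetCard] at hT hT'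
    have hb2 : b ∈ T := by
      by_contra hb
      refine hT' ⟨fun x hx => ?_, hT.2⟩
      have h1 := hT.1 hx
      rw [Finset.mem_Icc] at h1 ⊢
      rcases eq_or_ne x b with rfl | hne
      · exact absurd hx hb
      · omega
    exact if_neg fun hcond => hcond b (Finset.mem_insert_of_mem hb2) (Finset.mem_insert_self _ _)
  refine Finset.sum_congr rfl fun T hT => ?_
  rw [Finset.mem_powersetCard] at hT
  have hmem : ∀ x ∈ T, a + 1 ≤ x ∧ x ≤ b - 1 := fun x hx => Finset.mem_Icc.1 (hT.1 hx)
  have hb1 : (b + 1) ∉ T := fun hx => by have := hmem _ hx; omega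
  have hcond : (∀ i ∈ insert (b+1) T, i + 1 ∉ insert (b+1) T) ↔ (∀ i ∈ T, i + 1 ∉ T) := by
    constructor
    · intro h i hi hc
      exact h i (Finset.mem_insert_of_mem hi) (Finset.mem_insert_of_mem hc)
    · intro h i hi
      rw [Finset.mem_insert] at hi
      rw [Finset.mem_insert]
      rintro (he | hmem')
      · rcases hi with rfl | hi
        · omega
        · have := hmem i hi; omega
      · rcases hi with rfl | hi
        · have := hmem _ hmem'; omega
        · exact h i hi hmem'
  rw [Finset.prod_insert hb1, if_congr hcond rfl rfl, mul_ite, mul_zero]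

lemma Pdim_vanish (R : ℤ → A) (a : ℤ) (k m : ℕ) (h : k < m) :
    Pdim R a (a + 2 * (k : ℤ) - 1) m = 0 := by
  rw [Pdim]
  refine Finset.sum_eq_zero fun S hS => ?_
  rw [Finset.mem_powersetCard] at hS
  rw [if_neg]
  intro hc
  obtain ⟨x, hx, y, hy, hxy, hfeq⟩ :=
    Finset.exists_ne_map_eq_of_card_lt_of_maps_to
      (t := Finset.range k) (f := fun i : ℤ => ((i - (a+1)) / 2).toNat)
      (by rw [Finset.card_range, hS.2]; exact h)
      (fun i hi => by
        have := hS.1 hi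
        rw [Finset.mem_Icc] at this
        rw [Finset.mem_coe, Finset.mem_range]
        show ((i - (a+1)) / 2).toNat < k
        omega)
  have hfeq' : ((x - (a+1)) / 2).toNat = ((y - (a+1)) / 2).toNat := hfeq
  have hxm := hS.1 hx; have hym := hS.1 hy
  rw [Finset.mem_Icc] at hxm hym
  have hadj : x = y + 1 ∨ y = x + 1 := by omega
  rcases hadj with rfl | rfl
  · exact hc y hy hx
  · exact hc x hx hy

lemma Pdim_rec (R : ℤ → A) (a : ℤ) {k : ℕ} (hk : 1 ≤ k) (m : ℕ) :
    Pdim R a (a + 2 * (k:ℤ) + 1) (m + 1) =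
      Pdim R a (a + 2 * (k:ℤ) - 1) (m + 1) +
        (R (a + 2 * (k:ℤ)) + R (a + 2 * (k:ℤ) + 1)) * Pdim R a (a + 2 * (k:ℤ) - 1) m -
        R (a + 2 * (k:ℤ)) * R (a + 2 * (k:ℤ) - 1) *
          (if m = 0 then 0 else Pdim R a (a + 2 * (k:ℤ) - 3) (m - 1)) := by
  have hk' : (1:ℤ) ≤ (k:ℤ) := by exact_mod_cast hk
  have step1 := Pdim_step R (show a ≤ a + 2 * (k:ℤ) by omega) m
  have step2 := Pdim_step R (show a ≤ a + 2 * (k:ℤ) - 1 by omega) m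
  rw [show a + 2 * (k:ℤ) - 1 + 1 = a + 2 * (k:ℤ) by ring,
    show a + 2 * (k:ℤ) - 1 - 1 = a + 2 * (k:ℤ) - 2 by ring] at step2
  match m with
  | 0 =>
    simp only [Pdim_zero, if_pos rfl, eq_self_iff_true, if_true, mul_one, mul_zero, sub_zero] at *
    rw [step1, step2]
    ring
  | m' + 1 =>
    rw [if_neg (Nat.succ_ne_zero m')]
    have step3 := Pdim_step R (show a ≤ a + 2 * (k:ℤ) - 2 by omega) m'
    rw [show a + 2 * (k:ℤ) - 2 + 1 = a + 2 * (k:ℤ) - 1 by ring,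
      show a + 2 * (k:ℤ) - 2 - 1 = a + 2 * (k:ℤ) - 3 by ring] at step3
    rw [step1, step2, step3]
    simp only [Nat.add_sub_cancel]
    ring

lemma Z_rec (R : ℤ → A) (a : ℤ) (j l : ℕ) :
    Zwp R a (a + 2 * (j:ℤ)) (2 * l + 2) =
      (if j = 0 then 0 else Zwp R a (a + 2 * ((j - 1 : ℕ):ℤ)) (2 * l)) +
        (R (a + 2 * (j:ℤ) + 1) + if 1 ≤ j then R (a + 2 * (j:ℤ)) else 0) *
          Zwp R a (a + 2 * (j:ℤ)) (2 * l) +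
        R (a + 2 * (j:ℤ) + 2) * R (a + 2 * (j:ℤ) + 1) *
          Zwp R a (a + 2 * ((j + 1 : ℕ):ℤ)) (2 * l) := by
  rw [Zwp_two_step R a _ l (by omega)]
  rcases Nat.eq_zero_or_pos j with rfl | hj
  · rw [Zwp_of_lt R _ (by omega : a + 2 * ((0:ℕ):ℤ) - 2 < a), if_neg (by omega),
      if_pos rfl, if_neg (by omega)]
    push_cast
    ring
  · rw [if_pos (by omega), if_neg (by omega), if_pos (by omega : 1 ≤ j),
      show a + 2 * (j:ℤ) - 2 = a + 2 * ((j - 1 : ℕ):ℤ) by push_cast [hj]; ring]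
    push_cast
    ring

lemma Pdim_a1 (R : ℤ → A) (a : ℤ) : Pdim R a (a + 1) 1 = R (a + 1) := by
  rw [Pdim, Finset.Icc_self,
    show (1:ℕ) = ({a+1} : Finset ℤ).card from (Finset.card_singleton _).symm,
    Finset.powersetCard_self, Finset.sum_singleton, if_pos (by intro i hi; simp at hi ⊢; omega),
    Finset.prod_singleton]

theorem main (R : ℤ → A) (a : ℤ) : ∀ (k j : ℕ),
    (∑ l ∈ Finset.range (k + 1),
        (-1 : A) ^ (k - l) * Pdim R a (a + 2 * (k : ℤ) - 1) (k - l) *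
          Zwp R a (a + 2 * (j : ℤ)) (2 * l)) =
      if k = j then 1 else 0 := by
  intro k
  induction k using Nat.strong_induction_on with
  | _ k ih =>
  intro j
  match k with
  | 0 =>
    rw [Finset.sum_range_one, show (0:ℕ) - 0 = 0 from rfl, Pdim_zero, pow_zero,
      show 2 * 0 = 0 from rfl, Zwp_zero]
    push_cast
    split_ifs <;> first | ring1 | omega | (exfalso; omega)
  | 1 =>
    rw [Finset.sum_range_succ, Finset.sum_range_one,
      show a + 2 * ((1:ℕ):ℤ) - 1 = a + 1 by push_cast; ring,
      show (1:ℕ) - 0 = 1 from rfl, show (1:ℕ) - 1 = 0 from rfl, Pdim_zero, Pdim_a1,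
      show 2 * 1 = 2 * 0 + 2 from rfl, Z_rec R a j 0, pow_one, pow_zero,
      show 2 * 0 = 0 from rfl]
    simp only [Zwp_zero]
    rcases j with _ | _ | j <;> push_cast <;> norm_num <;>
      split_ifs <;> first | ring1 | omega | (exfalso; omega)
  | (k + 2) =>
    rw [show a + 2 * ((k+2:ℕ):ℤ) - 1 = a + 2 * ((k+1:ℕ):ℤ) + 1 by push_cast; ring,
      Finset.sum_range_succ, show k+2-(k+2) = 0 by omega, Pdim_zero, pow_zero, one_mul,
      one_mul]
    have hsplit :
        (∑ l ∈ Finset.range (k + 2), (-1:A) ^ (k + 2 - l) *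
            Pdim R a (a + 2 * ((k+1:ℕ):ℤ) + 1) (k + 2 - l) * Zwp R a (a + 2 * (j:ℤ)) (2 * l))
          = (∑ l ∈ Finset.range (k + 2), (-1:A) ^ (k + 2 - l) *
              Pdim R a (a + 2 * ((k+1:ℕ):ℤ) - 1) (k + 2 - l) * Zwp R a (a + 2 * (j:ℤ)) (2 * l))
            - (R (a + 2 * ((k+1:ℕ):ℤ)) + R (a + 2 * ((k+1:ℕ):ℤ) + 1)) *
              (∑ l ∈ Finset.range (k + 1 + 1), (-1:A) ^ (k + 1 - l) *
                Pdim R a (a + 2 * ((k+1:ℕ):ℤ) - 1) (k + 1 - l) * Zwp R a (a + 2 * (j:ℤ)) (2 * l))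
            + R (a + 2 * ((k+1:ℕ):ℤ)) * R (a + 2 * ((k+1:ℕ):ℤ) - 1) *
              (∑ l ∈ Finset.range (k + 1 + 1), (-1:A) ^ (k + 1 - l) *
                (if k + 1 - l = 0 then (0:A) else Pdim R a (a + 2 * ((k+1:ℕ):ℤ) - 3) (k - l)) *
                  Zwp R a (a + 2 * (j:ℤ)) (2 * l)) := by
      rw [Finset.mul_sum, Finset.mul_sum, ← Finset.sum_sub_distrib, ← Finset.sum_add_distrib]
      refine Finset.sum_congr rfl fun l hl => ?_
      rw [Finset.mem_range] at hl
      rw [show k + 2 - l = (k + 1 - l) + 1 by omega,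
        Pdim_rec R a (by omega : 1 ≤ k + 1) (k + 1 - l),
        show k + 1 - l - 1 = k - l by omega]
      ring
    have hu3 :
        (∑ l ∈ Finset.range (k + 1 + 1), (-1:A) ^ (k + 1 - l) *
            (if k + 1 - l = 0 then (0:A) else Pdim R a (a + 2 * ((k+1:ℕ):ℤ) - 3) (k - l)) *
              Zwp R a (a + 2 * (j:ℤ)) (2 * l))
          = -(if k = j then 1 else 0) := by
      rw [Finset.sum_range_succ, show k + 1 - (k + 1) = 0 by omega, if_pos rfl,
        mul_zero, zero_mul, add_zero,
        show a + 2 * ((k+1:ℕ):ℤ) - 3 = a + 2 * (k:ℤ) - 1 by push_cast; ring]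
      have hpt : ∀ l ∈ Finset.range (k + 1),
          (-1:A) ^ (k + 1 - l) *
              (if k + 1 - l = 0 then (0:A) else Pdim R a (a + 2 * (k:ℤ) - 1) (k - l)) *
            Zwp R a (a + 2 * (j:ℤ)) (2 * l)
          = -((-1:A) ^ (k - l) * Pdim R a (a + 2 * (k:ℤ) - 1) (k - l) *
              Zwp R a (a + 2 * (j:ℤ)) (2 * l)) := by
        intro l hl
        rw [Finset.mem_range] at hl
        rw [show k + 1 - l = (k - l) + 1 by omega, if_neg (by omega)]
        ring
      rw [Finset.sum_congr rfl hpt, Finset.sum_neg_distrib, ih k (by omega) j]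
    have hA :
        (∑ l ∈ Finset.range (k + 2), (-1:A) ^ (k + 2 - l) *
            Pdim R a (a + 2 * ((k+1:ℕ):ℤ) - 1) (k + 2 - l) * Zwp R a (a + 2 * (j:ℤ)) (2 * l))
          + Zwp R a (a + 2 * (j:ℤ)) (2 * (k + 2))
        = (if j = 0 then (0:A) else (if k + 1 = j - 1 then 1 else 0))
          + (R (a + 2 * (j:ℤ) + 1) + if 1 ≤ j then R (a + 2 * (j:ℤ)) else 0) *
              (if k + 1 = j then 1 else 0)
          + R (a + 2 * (j:ℤ) + 2) * R (a + 2 * (j:ℤ) + 1) *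
              (if k + 1 = j + 1 then 1 else 0) := by
      have h1 :
          (∑ l ∈ Finset.range (k + 2), (-1:A) ^ (k + 2 - l) *
            Pdim R a (a + 2 * ((k+1:ℕ):ℤ) - 1) (k + 2 - l) * Zwp R a (a + 2 * (j:ℤ)) (2 * l))
          + Zwp R a (a + 2 * (j:ℤ)) (2 * (k + 2))
          = ∑ l ∈ Finset.range (k + 2 + 1), (-1:A) ^ (k + 2 - l) *
              Pdim R a (a + 2 * ((k+1:ℕ):ℤ) - 1) (k + 2 - l) * Zwp R a (a + 2 * (j:ℤ)) (2 * l) := by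
        rw [Finset.sum_range_succ _ (k+2), show k + 2 - (k + 2) = 0 by omega, Pdim_zero,
          pow_zero, one_mul, one_mul]
      rw [h1, Finset.sum_range_succ', Nat.sub_zero, Pdim_vanish R a (k+1) (k+2) (by omega),
        mul_zero, zero_mul, add_zero]
      have h2 : ∀ l ∈ Finset.range (k + 2),
          (-1:A) ^ (k + 2 - (l + 1)) * Pdim R a (a + 2 * ((k+1:ℕ):ℤ) - 1) (k + 2 - (l + 1)) *
              Zwp R a (a + 2 * (j:ℤ)) (2 * (l + 1))
          = ((-1:A) ^ (k + 1 - l) * Pdim R a (a + 2 * ((k+1:ℕ):ℤ) - 1) (k + 1 - l) *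
              (if j = 0 then (0:A) else Zwp R a (a + 2 * ((j - 1 : ℕ):ℤ)) (2 * l)))
            + (R (a + 2 * (j:ℤ) + 1) + if 1 ≤ j then R (a + 2 * (j:ℤ)) else 0) *
              ((-1:A) ^ (k + 1 - l) * Pdim R a (a + 2 * ((k+1:ℕ):ℤ) - 1) (k + 1 - l) *
                Zwp R a (a + 2 * (j:ℤ)) (2 * l))
            + R (a + 2 * (j:ℤ) + 2) * R (a + 2 * (j:ℤ) + 1) *
              ((-1:A) ^ (k + 1 - l) * Pdim R a (a + 2 * ((k+1:ℕ):ℤ) - 1) (k + 1 - l) *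
                Zwp R a (a + 2 * ((j + 1 : ℕ):ℤ)) (2 * l)) := by
        intro l hl
        rw [show k + 2 - (l + 1) = k + 1 - l by omega, show 2 * (l + 1) = 2 * l + 2 by ring,
          Z_rec R a j l]
        ring
      rw [Finset.sum_congr rfl h2, Finset.sum_add_distrib, Finset.sum_add_distrib,
        ← Finset.mul_sum, ← Finset.mul_sum]
      congr 1
      · congr 1
        · by_cases hj : j = 0
          · simp [hj]
          · simp only [if_neg hj]
            exact ih (k+1) (by omega) (j - 1)
        · congr 1
          exact ih (k+1) (by omega) j
      · congr 1
        exact ih (k+1) (by omega) (j + 1)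
    have hfin :
        (if j = 0 then (0:A) else (if k + 1 = j - 1 then 1 else 0))
          + (R (a + 2 * (j:ℤ) + 1) + if 1 ≤ j then R (a + 2 * (j:ℤ)) else 0) *
              (if k + 1 = j then 1 else 0)
          + R (a + 2 * (j:ℤ) + 2) * R (a + 2 * (j:ℤ) + 1) * (if k + 1 = j + 1 then 1 else 0)
          - (R (a + 2 * ((k+1:ℕ):ℤ)) + R (a + 2 * ((k+1:ℕ):ℤ) + 1)) *
              (if k + 1 = j then 1 else 0)
          - R (a + 2 * ((k+1:ℕ):ℤ)) * R (a + 2 * ((k+1:ℕ):ℤ) - 1) * (if k = j then 1 else 0)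
        = (if k + 2 = j then 1 else 0) := by
      rw [show a + 2 * ((k+1:ℕ):ℤ) + 1 = a + 2 * (k:ℤ) + 3 by push_cast; ring,
        show a + 2 * ((k+1:ℕ):ℤ) - 1 = a + 2 * (k:ℤ) + 1 by push_cast; ring,
        show a + 2 * ((k+1:ℕ):ℤ) = a + 2 * (k:ℤ) + 2 by push_cast; ring]
      rcases eq_or_ne j (k+2) with rfl | h1
      · rw [if_neg (show ¬(k+2:ℕ) = 0 by omega), if_pos (show k + 1 = k + 2 - 1 by omega),
          if_neg (show ¬k + 1 = k + 2 by omega), if_neg (show ¬k + 1 = k + 2 + 1 by omega),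
          if_neg (show ¬k = k + 2 by omega), if_pos rfl]
        ring
      · rcases eq_or_ne j (k+1) with rfl | h2
        · rw [if_neg (show ¬(k+1:ℕ) = 0 by omega), if_neg (show ¬k + 1 = k + 1 - 1 by omega),
            if_pos (rfl : k + 1 = k + 1), if_neg (show ¬k + 1 = k + 1 + 1 by omega),
            if_pos (show 1 ≤ k + 1 by omega), if_neg (show ¬k = k + 1 by omega),
            if_neg (show ¬k + 2 = k + 1 by omega),
            show a + 2 * ((k+1:ℕ):ℤ) + 1 = a + 2 * (k:ℤ) + 3 by push_cast; ring,
            show a + 2 * ((k+1:ℕ):ℤ) = a + 2 * (k:ℤ) + 2 by push_cast; ring]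
          ring
        · rcases eq_or_ne j k with rfl | h3
          · have hz : (if (j:ℕ) = 0 then (0:A) else (if j + 1 = j - 1 then 1 else 0)) = 0 := by
              rcases eq_or_ne j 0 with rfl | hk
              · simp
              · rw [if_neg hk, if_neg (by omega)]
            rw [hz, if_neg (show ¬j + 1 = j by omega), if_pos (rfl : j + 1 = j + 1),
              if_pos (rfl : j = j), if_neg (show ¬j + 2 = j by omega)]
            ring
          · have hz : (if j = 0 then (0:A) else (if k + 1 = j - 1 then 1 else 0)) = 0 := by
              rcases eq_or_ne j 0 with rfl | hj
              · simp
              · rw [if_neg hj, if_neg (by omega)]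
            rw [hz, if_neg (show ¬k + 1 = j by omega), if_neg (show ¬k + 1 = j + 1 by omega),
              if_neg (show ¬k = j by omega), if_neg (show ¬k + 2 = j by omega)]
            ring
    rw [hsplit, ih (k+1) (by omega) j, hu3]
    linear_combination hA + hfin


/-- inversion relation between hard-dimer partition functions and
positive-walk generating functions. -/
theorem stmt_4 {A : Type*} [CommRing A] (R : ℤ → A) (a : ℤ) (j k : ℕ) :
    ∑ l ∈ Finset.range (k + 1),
        (-1 : A) ^ (k - l) * Pdim R a (a + 2 * (k : ℤ) - 1) (k - l) *
          Zwp R a (a + 2 * (j : ℤ)) (2 * l) =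
      if k = j then 1 else 0 :=
  main R a k j
end

section
/- For every commutative ring A, every family of weights R : ℤ → A, every m ≥ 1, all g_1, …, g_m ∈ A and all integers a, b, the grand-canonical walk generating function satisfies V'_{a+1,b} + R_a · V'_{a−1,b} = V'_{a,b−1} + R_{b+1} · V'_{a,b+1}. -/
open Finset

variable {A : Type*} [CommRing A]

lemma Zw_succ_left (R : ℤ → A) (a b : ℤ) (k : ℕ) :
    Zw R a b (k + 1) = Zw R (a + 1) b k + R a * Zw R (a - 1) b k := by
  unfold Zw
  rw [← ((Fin.consEquiv (fun _ : Fin (k+1) => Bool))).sum_comp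
    (fun s : Fin (k+1) → Bool =>
      if walkEnd a (List.ofFn s) = b then walkWeight R a (List.ofFn s) else 0)]
  rw [Fintype.sum_prod_type, Fintype.sum_bool]
  simp only [List.ofFn_succ, Fin.consEquiv_symm_apply, Fin.consEquiv_apply, Fin.cons_zero,
    Fin.cons_succ, walkEnd, walkWeight, Finset.mul_sum, mul_ite, mul_zero]

lemma Zw_succ_right (R : ℤ → A) (a b : ℤ) (k : ℕ) :
    Zw R a b (k + 1) = Zw R a (b - 1) k + R (b + 1) * Zw R a (b + 1) k := by
  unfold Zw
  rw [← ((Fin.snocEquiv (fun _ => Bool))).sum_comp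
    (fun s : Fin (k+1) → Bool =>
      if walkEnd a (List.ofFn s) = b then walkWeight R a (List.ofFn s) else 0)]
  rw [Fintype.sum_prod_type, Fintype.sum_bool]
  have hofn : ∀ (x : Bool) (f : Fin k → Bool),
      List.ofFn (fun i => Fin.snocEquiv (fun _ => Bool) (x, f) i) = (List.ofFn f).concat x := by
    intro x f
    rw [List.ofFn_succ']
    congr 1
    · ext i; simp [Fin.snocEquiv]
    · simp [Fin.snocEquiv]
  simp only [hofn, List.concat_eq_append, walkEnd_append, walkWeight_append]
  congr 1
  · apply Finset.sum_congr rfl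
    intro f _
    simp only [walkEnd, walkWeight, mul_one]
    congr 1
    simp only [eq_iff_iff]
    omega
  · rw [Finset.mul_sum]
    apply Finset.sum_congr rfl
    intro f _
    simp only [walkEnd, walkWeight, mul_one]
    by_cases h : walkEnd a (List.ofFn f) - 1 = b
    · have : walkEnd a (List.ofFn f) = b + 1 := by omega
      rw [if_pos h, if_pos this, this]; ring
    · have : walkEnd a (List.ofFn f) ≠ b + 1 := by omega
      rw [if_neg h, if_neg this, mul_zero]

/-- the fundamental identity for the grand-canonical generating
function `V'`. -/
theorem stmt_6 {A : Type*} [CommRing A] (R : ℤ → A) (m : ℕ) (hm : 1 ≤ m) (g : ℕ → A)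
    (a b : ℤ) :
    Vp R g m (a + 1) b + R a * Vp R g m (a - 1) b =
      Vp R g m a (b - 1) + R (b + 1) * Vp R g m a (b + 1) := by
  unfold Vp
  rw [Finset.mul_sum, Finset.mul_sum, ← Finset.sum_add_distrib, ← Finset.sum_add_distrib]
  apply Finset.sum_congr rfl
  intro k hk
  have hk1 : 1 ≤ k := (Finset.mem_Icc.mp hk).1
  have h2 : 2 * k - 1 + 1 = 2 * k := by omega
  have hL := Zw_succ_left R a b (2 * k - 1)
  have hR := Zw_succ_right R a b (2 * k - 1)
  rw [h2] at hL hR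
  linear_combination g k * (hL.symm.trans hR)
end
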